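/- In the solvable extension 𝔰 of ℝⁿ by a positive symmetric operator L with eigenvalues 0 < μ₁ ≤ ... ≤ μₙ, if E = eₖ is a unit eigenvector of L with eigenvalue μₖ satisfying 0 < μₖ < 4μ₁, then for all sufficiently large γ the Weyl connection defined by γE is non-positive (E is SNP). -/

import Mathlib

open scoped RealInnerProductSpace

/-- The operator `L` of the solvable extension: diagonal in the orthonormal basis
`e₀,…,eₙ` of `ℝ^{n+1}` with eigenvalues `μ₀,…,μₙ` (here `μ₀ = 0`, `e₀ = b`). -/
noncomputable def solvL (n : ℕ) (μ : Fin (n + 1) → ℝ)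
    (x : EuclideanSpace ℝ (Fin (n + 1))) : EuclideanSpace ℝ (Fin (n + 1)) :=
  WithLp.toLp 2 (fun i => μ i * x i)

/-- The Levi-Civita covariant derivative of left-invariant fields on the solvable extension,
determined by `∇_b b = 0`, `∇_b u = 0`, `∇_u b = −Lu`, `∇_u v = ⟨Lu,v⟩b`. -/
noncomputable def solvNabla (n : ℕ) (μ : Fin (n + 1) → ℝ)
    (X Y : EuclideanSpace ℝ (Fin (n + 1))) : EuclideanSpace ℝ (Fin (n + 1)) :=
  ⟪solvL n μ X, Y⟫ • (EuclideanSpace.single (0 : Fin (n + 1)) (1 : ℝ)) - Y 0 • solvL n μ X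

/-- The Lie bracket of the solvable extension: `[e₀,eᵢ] = μᵢeᵢ` for `i ≥ 1`,
`[eᵢ,eⱼ] = 0` for `i,j ≥ 1`. -/
noncomputable def solvBracket (n : ℕ) (μ : Fin (n + 1) → ℝ)
    (X Y : EuclideanSpace ℝ (Fin (n + 1))) : EuclideanSpace ℝ (Fin (n + 1)) :=
  X 0 • solvL n μ Y - Y 0 • solvL n μ X

/-- The curvature operator `R(X,Y)Z` of the Levi-Civita connection on the solvable
extension. -/
noncomputable def solvCurv (n : ℕ) (μ : Fin (n + 1) → ℝ)
    (X Y Z : EuclideanSpace ℝ (Fin (n + 1))) : EuclideanSpace ℝ (Fin (n + 1)) :=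
  solvNabla n μ X (solvNabla n μ Y Z) - solvNabla n μ Y (solvNabla n μ X Z)
    - solvNabla n μ (solvBracket n μ X Y) Z

/-- The Weyl sectional curvature on the solvable extension, in the direction of the plane
`Π` with orthonormal basis `{X,Y}`, for the Weyl connection defined by the field `F`:
`K̂(Π) = K(Π) − |F_⊥|² − ⟨∇_X F,X⟩ − ⟨∇_Y F,Y⟩`. -/
noncomputable def solvWeylSec (n : ℕ) (μ : Fin (n + 1) → ℝ)
    (F X Y : EuclideanSpace ℝ (Fin (n + 1))) : ℝ :=
  ⟪solvCurv n μ Y X X, Y⟫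
    - ⟪F - ⟪F, X⟫ • X - ⟪F, Y⟫ • Y, F - ⟪F, X⟫ • X - ⟪F, Y⟫ • Y⟫
    - (⟪solvNabla n μ X F, X⟫ + ⟪solvNabla n μ Y F, Y⟫)

section Aux
variable (n : ℕ) (μ : Fin (n+1) → ℝ)

lemma esum (X Y : EuclideanSpace ℝ (Fin (n+1))) : ⟪X, Y⟫ = ∑ i, X i * Y i := by
  simp [PiLp.inner_apply, RCLike.inner_apply, conj_trivial]
  exact Finset.sum_congr rfl (fun i _ => mul_comm _ _)

lemma sL_zero (hμ0 : μ 0 = 0) (Z : EuclideanSpace ℝ (Fin (n+1))) : (solvL n μ Z) 0 = 0 := by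
  simp [solvL, hμ0]

lemma inner_sL_e0 (hμ0 : μ 0 = 0) (Z : EuclideanSpace ℝ (Fin (n+1))) :
    ⟪solvL n μ Z, EuclideanSpace.single (0 : Fin (n+1)) (1:ℝ)⟫ = 0 := by
  rw [EuclideanSpace.inner_single_right]; simp [solvL, hμ0]

lemma sL_smul (a : ℝ) (Z : EuclideanSpace ℝ (Fin (n+1))) :
    solvL n μ (a • Z) = a • solvL n μ Z := by
  ext i; simp [solvL]; ring

lemma sL_sub (Z W : EuclideanSpace ℝ (Fin (n+1))) :
    solvL n μ (Z - W) = solvL n μ Z - solvL n μ W := by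
  ext i; simp [solvL]; ring

lemma sL_symm (Z W : EuclideanSpace ℝ (Fin (n+1))) :
    ⟪solvL n μ Z, W⟫ = ⟪Z, solvL n μ W⟫ := by
  simp [solvL, PiLp.inner_apply, RCLike.inner_apply, conj_trivial]
  exact Finset.sum_congr rfl (fun i _ => by ring)

lemma curvFormula (hμ0 : μ 0 = 0) (X Y : EuclideanSpace ℝ (Fin (n+1))) :
    ⟪solvCurv n μ Y X X, Y⟫ =
      ⟪solvL n μ X, Y⟫ ^ 2 - ⟪solvL n μ X, X⟫ * ⟪solvL n μ Y, Y⟫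
      - (Y 0)^2 * ⟪solvL n μ X, solvL n μ X⟫
      + 2 * (X 0) * (Y 0) * ⟪solvL n μ X, solvL n μ Y⟫
      - (X 0)^2 * ⟪solvL n μ Y, solvL n μ Y⟫ := by
  set e0 : EuclideanSpace ℝ (Fin (n+1)) := EuclideanSpace.single (0 : Fin (n+1)) (1:ℝ) with he0
  have he00 : e0 0 = 1 := by simp [he0, EuclideanSpace.single_apply]
  set P := ⟪solvL n μ X, X⟫ with hP
  set Q := ⟪solvL n μ Y, Y⟫ with hQ
  set S := ⟪solvL n μ X, Y⟫ with hS
  set T := ⟪solvL n μ X, solvL n μ Y⟫ with hT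
  set U := ⟪solvL n μ X, solvL n μ X⟫ with hU
  set V := ⟪solvL n μ Y, solvL n μ Y⟫ with hV
  have hA : solvNabla n μ X X = P • e0 - X 0 • solvL n μ X := rfl
  have hC : solvNabla n μ Y X = S • e0 - X 0 • solvL n μ Y := by
    rw [solvNabla, sL_symm n μ Y X, real_inner_comm, ← hS, ← he0]
  have hA0 : (solvNabla n μ X X) 0 = P := by
    rw [hA]; simp [he00, sL_zero n μ hμ0]
  have hC0 : (solvNabla n μ Y X) 0 = S := by
    rw [hC]; simp [he00, sL_zero n μ hμ0]
  have h1 : solvNabla n μ Y (solvNabla n μ X X)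
      = (-(X 0 * T)) • e0 - P • solvL n μ Y := by
    rw [show solvNabla n μ Y (solvNabla n μ X X)
        = ⟪solvL n μ Y, solvNabla n μ X X⟫ • e0
          - (solvNabla n μ X X) 0 • solvL n μ Y from rfl, hA0]
    have : ⟪solvL n μ Y, solvNabla n μ X X⟫ = -(X 0 * T) := by
      rw [hA, inner_sub_right, real_inner_smul_right, real_inner_smul_right,
        inner_sL_e0 n μ hμ0, real_inner_comm (solvL n μ X) (solvL n μ Y), ← hT]
      ring
    rw [this]
  have h2 : solvNabla n μ X (solvNabla n μ Y X)
      = (-(X 0 * T)) • e0 - S • solvL n μ X := by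
    rw [show solvNabla n μ X (solvNabla n μ Y X)
        = ⟪solvL n μ X, solvNabla n μ Y X⟫ • e0
          - (solvNabla n μ Y X) 0 • solvL n μ X from rfl, hC0]
    have : ⟪solvL n μ X, solvNabla n μ Y X⟫ = -(X 0 * T) := by
      rw [hC, inner_sub_right, real_inner_smul_right, real_inner_smul_right,
        inner_sL_e0 n μ hμ0, ← hT]
      ring
    rw [this]
  have h3 : solvNabla n μ (solvBracket n μ Y X) X
      = (Y 0 * U - X 0 * T) • e0
        - X 0 • (Y 0 • solvL n μ (solvL n μ X) - X 0 • solvL n μ (solvL n μ Y)) := by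
    rw [show solvNabla n μ (solvBracket n μ Y X) X
        = ⟪solvL n μ (solvBracket n μ Y X), X⟫ • e0 - X 0 • solvL n μ (solvBracket n μ Y X)
          from rfl]
    rw [solvBracket, sL_sub, sL_smul, sL_smul]
    have : ⟪Y 0 • solvL n μ (solvL n μ X) - X 0 • solvL n μ (solvL n μ Y), X⟫
        = Y 0 * U - X 0 * T := by
      rw [inner_sub_left, real_inner_smul_left, real_inner_smul_left,
        sL_symm n μ (solvL n μ X) X, ← hU,
        sL_symm n μ (solvL n μ Y) X, real_inner_comm (solvL n μ X) (solvL n μ Y), ← hT]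
    rw [this]
  rw [solvCurv, h1, h2, h3]
  have he0Y : ⟪e0, Y⟫ = Y 0 := by
    rw [he0, EuclideanSpace.inner_single_left]; simp
  have hLLXY : ⟪solvL n μ (solvL n μ X), Y⟫ = T := by
    rw [sL_symm n μ (solvL n μ X) Y]
  have hLLYY : ⟪solvL n μ (solvL n μ Y), Y⟫ = V := by
    rw [sL_symm n μ (solvL n μ Y) Y]
  simp only [inner_sub_left, real_inner_smul_left, inner_sub_right, he0Y,
    hLLXY, hLLYY]
  rw [show ⟪solvL n μ Y, Y⟫ = Q from rfl, show ⟪solvL n μ X, Y⟫ = S from rfl]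
  ring

lemma expand2 (E E' X Y : EuclideanSpace ℝ (Fin (n+1))) (a b a' b' : ℝ) :
    ⟪E - a•X - b•Y, E' - a'•X - b'•Y⟫
      = ⟪E,E'⟫ - a'*⟪E,X⟫ - b'*⟪E,Y⟫ - a*⟪X,E'⟫ + a*a'*⟪X,X⟫ + a*b'*⟪X,Y⟫
        - b*⟪Y,E'⟫ + b*a'*⟪Y,X⟫ + b*b'*⟪Y,Y⟫ := by
  simp only [inner_sub_left, inner_sub_right, real_inner_smul_left, real_inner_smul_right]
  ring

lemma proj_cs (k : Fin (n+1)) (hk0 : k ≠ 0) (X Y : EuclideanSpace ℝ (Fin (n+1)))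
    (hX : ⟪X, X⟫ = 1) (hY : ⟪Y, Y⟫ = 1) (hXY : ⟪X, Y⟫ = 0) :
    (X k * X 0 + Y k * Y 0)^2 ≤ 1 - (X k)^2 - (Y k)^2 ∧ 0 ≤ 1 - (X k)^2 - (Y k)^2 := by
  set E0 : EuclideanSpace ℝ (Fin (n+1)) := EuclideanSpace.single (0:Fin (n+1)) (1:ℝ) with hE0
  set Ek : EuclideanSpace ℝ (Fin (n+1)) := EuclideanSpace.single k (1:ℝ) with hEk
  have hE0X : ⟪E0, X⟫ = X 0 := by rw [hE0, EuclideanSpace.inner_single_left]; simp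
  have hE0Y : ⟪E0, Y⟫ = Y 0 := by rw [hE0, EuclideanSpace.inner_single_left]; simp
  have hEkX : ⟪Ek, X⟫ = X k := by rw [hEk, EuclideanSpace.inner_single_left]; simp
  have hEkY : ⟪Ek, Y⟫ = Y k := by rw [hEk, EuclideanSpace.inner_single_left]; simp
  have hXE0 : ⟪X, E0⟫ = X 0 := by rw [real_inner_comm]; exact hE0X
  have hYE0 : ⟪Y, E0⟫ = Y 0 := by rw [real_inner_comm]; exact hE0Y
  have hXEk : ⟪X, Ek⟫ = X k := by rw [real_inner_comm]; exact hEkX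
  have hYEk : ⟪Y, Ek⟫ = Y k := by rw [real_inner_comm]; exact hEkY
  have hE00 : ⟪E0, E0⟫ = 1 := by
    rw [hE0, EuclideanSpace.inner_single_left]; simp [EuclideanSpace.single_apply]
  have hEkk : ⟪Ek, Ek⟫ = 1 := by
    rw [hEk, EuclideanSpace.inner_single_left]; simp [EuclideanSpace.single_apply]
  have hE0k : ⟪E0, Ek⟫ = 0 := by
    rw [hE0, hEk, EuclideanSpace.inner_single_left]
    simp [EuclideanSpace.single_apply, (Ne.symm hk0 : (0 : Fin (n+1)) ≠ k)]
  have hYX : ⟪Y, X⟫ = 0 := by rw [real_inner_comm]; exact hXY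
  set u : EuclideanSpace ℝ (Fin (n+1)) := E0 - X 0 • X - Y 0 • Y with hu
  set v : EuclideanSpace ℝ (Fin (n+1)) := Ek - X k • X - Y k • Y with hv
  have huu : ⟪u, u⟫ = 1 - (X 0)^2 - (Y 0)^2 := by
    rw [hu, expand2, hE00, hE0X, hE0Y, hXE0, hYE0, hX, hY, hXY, hYX]; ring
  have hvv : ⟪v, v⟫ = 1 - (X k)^2 - (Y k)^2 := by
    rw [hv, expand2, hEkk, hEkX, hEkY, hXEk, hYEk, hX, hY, hXY, hYX]; ring
  have huv : ⟪u, v⟫ = -(X k * X 0 + Y k * Y 0) := by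
    rw [hu, hv, expand2, hE0k, hE0X, hE0Y, hXEk, hYEk, hX, hY, hXY, hYX]; ring
  have hcs := real_inner_mul_inner_self_le u v
  have hunn : (0:ℝ) ≤ ⟪u, u⟫ := real_inner_self_nonneg
  have hvnn : (0:ℝ) ≤ ⟪v, v⟫ := real_inner_self_nonneg
  rw [huu] at hcs hunn
  rw [hvv] at hcs hvnn
  rw [huv] at hcs
  exact ⟨by nlinarith only [hcs, hunn, hvnn, sq_nonneg (X 0), sq_nonneg (Y 0)], hvnn⟩

end Aux

set_option maxHeartbeats 1000000 in
/-- In the solvable extension of `ℝⁿ` by a positive symmetric operator `L` with eigenvalues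
`0 < μ₁ ≤ … ≤ μₙ`, if `E = eₖ` is a unit eigenvector of `L` with eigenvalue `μₖ` satisfying
`0 < μₖ < 4μ₁`, then for all sufficiently large `γ` the Weyl connection defined by `γE` is
non-positive (i.e. `E` is SNP). -/
theorem solv_eigenvector_snp (n : ℕ) (hn : 1 ≤ n)
    (μ : Fin (n + 1) → ℝ) (hμ0 : μ 0 = 0)
    (hpos : ∀ i : Fin (n + 1), i ≠ 0 → 0 < μ i)
    (hmono : ∀ i j : Fin (n + 1), i ≠ 0 → i ≤ j → μ i ≤ μ j)
    (k : Fin (n + 1)) (hk0 : k ≠ 0) (hk : μ k < 4 * μ 1) :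
    ∃ γ₀ : ℝ, ∀ γ : ℝ, γ₀ ≤ γ →
      ∀ X Y : EuclideanSpace ℝ (Fin (n + 1)),
        ⟪X, X⟫ = 1 → ⟪Y, Y⟫ = 1 → ⟪X, Y⟫ = 0 →
          solvWeylSec n μ (γ • EuclideanSpace.single k 1) X Y ≤ 0 := by
  -- basic Fin facts
  have hv1 : (1 : Fin (n+1)).val = 1 := by
    rw [Fin.val_one']; exact Nat.mod_eq_of_lt (by omega)
  have h10 : (1 : Fin (n+1)) ≠ 0 := by
    intro h; have := congrArg Fin.val h; rw [hv1] at this; simp at this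
  have hle : ∀ j : Fin (n+1), j ≠ 0 → (1 : Fin (n+1)) ≤ j := by
    intro j hj
    rw [Fin.le_def, hv1]
    have : j.val ≠ 0 := fun h => hj (Fin.ext h)
    omega
  have m1pos : 0 < μ 1 := hpos 1 h10
  have mkpos : 0 < μ k := hpos k hk0
  have hm1k : μ 1 ≤ μ k := hmono 1 k h10 (hle k hk0)
  have hd : 0 < 4 * μ 1 - μ k := by linarith
  have hμnn : ∀ i, 0 ≤ μ i := by
    intro i; by_cases h : i = 0
    · rw [h, hμ0]
    · exact (hpos i h).le
  refine ⟨2 * μ 1 * μ k / (4 * μ 1 - μ k) + μ 1, ?_⟩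
  intro γ hγ X Y hX hY hXY
  have hanonneg : 0 ≤ 2 * μ 1 * μ k / (4 * μ 1 - μ k) :=
    div_nonneg (by positivity) hd.le
  have hγpos : 0 < γ := lt_of_lt_of_le (by linarith) hγ
  have hγ2 : 4 * (μ 1)^2 * μ k ≤ γ^2 * (4 * μ 1 - μ k) := by
    have ha : 2 * μ 1 * μ k / (4 * μ 1 - μ k) * (4 * μ 1 - μ k) = 2 * μ 1 * μ k :=
      div_mul_cancel₀ _ hd.ne'
    have hγsq : (2 * μ 1 * μ k / (4 * μ 1 - μ k) + μ 1)^2 ≤ γ^2 :=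
      pow_le_pow_left₀ (by linarith) hγ 2
    nlinarith [mul_le_mul_of_nonneg_right hγsq hd.le,
      mul_nonneg (mul_nonneg hanonneg hanonneg) hd.le,
      mul_nonneg (mul_nonneg m1pos.le m1pos.le) hd.le]
  have hA' : 0 < γ^2 - μ 1 * μ k := by
    nlinarith [mul_pos m1pos mkpos, mul_pos (mul_pos m1pos mkpos) mkpos]
  -- sums
  have hX' : ∑ i, X i * X i = 1 := by rw [← esum]; exact hX
  have hY' : ∑ i, Y i * Y i = 1 := by rw [← esum]; exact hY
  have hXY' : ∑ i, X i * Y i = 0 := by rw [← esum]; exact hXY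
  set S := ∑ i, μ i * (X i * Y i) with hSdef
  set P := ∑ i, μ i * (X i * X i) with hPdef
  set Q := ∑ i, μ i * (Y i * Y i) with hQdef
  set U := ∑ i, (μ i * X i) * (μ i * X i) with hUdef
  set V := ∑ i, (μ i * Y i) * (μ i * Y i) with hVdef
  set T := ∑ i, (μ i * X i) * (μ i * Y i) with hTdef
  set W := ∑ j, (μ j * μ j) * (Y 0 * X j - X 0 * Y j)^2 with hWdef
  set R := ∑ j, μ j * (X k * Y j - X j * Y k)^2 with hRdef
  have hSe : ⟪solvL n μ X, Y⟫ = S := by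
    rw [esum]; exact Finset.sum_congr rfl (fun i _ => by simp [solvL]; ring)
  have hPe : ⟪solvL n μ X, X⟫ = P := by
    rw [esum]; exact Finset.sum_congr rfl (fun i _ => by simp [solvL]; ring)
  have hQe : ⟪solvL n μ Y, Y⟫ = Q := by
    rw [esum]; exact Finset.sum_congr rfl (fun i _ => by simp [solvL]; ring)
  have hUe : ⟪solvL n μ X, solvL n μ X⟫ = U := by
    rw [esum]; exact Finset.sum_congr rfl (fun i _ => by simp [solvL])
  have hVe : ⟪solvL n μ Y, solvL n μ Y⟫ = V := by
    rw [esum]; exact Finset.sum_congr rfl (fun i _ => by simp [solvL])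
  have hTe : ⟪solvL n μ X, solvL n μ Y⟫ = T := by
    rw [esum]; exact Finset.sum_congr rfl (fun i _ => by simp [solvL])
  -- the quadratic term is the sum W
  have hQuad : (Y 0)^2 * U - 2 * (X 0) * (Y 0) * T + (X 0)^2 * V = W := by
    rw [hUdef, hTdef, hVdef, hWdef, Finset.mul_sum, Finset.mul_sum, Finset.mul_sum,
      ← Finset.sum_sub_distrib, ← Finset.sum_add_distrib]
    exact Finset.sum_congr rfl (fun j _ => by ring)
  -- F-terms
  have hFX : ⟪(γ • EuclideanSpace.single k 1 : EuclideanSpace ℝ (Fin (n+1))), X⟫ = γ * X k := by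
    rw [real_inner_smul_left, EuclideanSpace.inner_single_left]; simp
  have hFY : ⟪(γ • EuclideanSpace.single k 1 : EuclideanSpace ℝ (Fin (n+1))), Y⟫ = γ * Y k := by
    rw [real_inner_smul_left, EuclideanSpace.inner_single_left]; simp
  have hFF : ⟪(γ • EuclideanSpace.single k 1 : EuclideanSpace ℝ (Fin (n+1))),
      (γ • EuclideanSpace.single k 1 : EuclideanSpace ℝ (Fin (n+1)))⟫ = γ^2 := by
    rw [real_inner_smul_left, real_inner_smul_right, EuclideanSpace.inner_single_left]
    simp [EuclideanSpace.single_apply]; ring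
  have hGperp : ⟪(γ • EuclideanSpace.single k 1 : EuclideanSpace ℝ (Fin (n+1)))
        - ⟪(γ • EuclideanSpace.single k 1 : EuclideanSpace ℝ (Fin (n+1))), X⟫ • X
        - ⟪(γ • EuclideanSpace.single k 1 : EuclideanSpace ℝ (Fin (n+1))), Y⟫ • Y,
      (γ • EuclideanSpace.single k 1 : EuclideanSpace ℝ (Fin (n+1)))
        - ⟪(γ • EuclideanSpace.single k 1 : EuclideanSpace ℝ (Fin (n+1))), X⟫ • X
        - ⟪(γ • EuclideanSpace.single k 1 : EuclideanSpace ℝ (Fin (n+1))), Y⟫ • Y⟫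
      = γ^2 - (γ * X k)^2 - (γ * Y k)^2 := by
    rw [hFX, hFY, expand2, hFF, hFX, hFY, hX, hY, hXY,
      real_inner_comm (γ • EuclideanSpace.single k 1) Y, hFY,
      real_inner_comm (γ • EuclideanSpace.single k 1) X, hFX,
      real_inner_comm X Y, hXY]
    ring
  have hNab : ∀ Z : EuclideanSpace ℝ (Fin (n+1)),
      ⟪solvNabla n μ Z (γ • EuclideanSpace.single k 1), Z⟫ = γ * (μ k * Z k) * Z 0 := by
    intro Z
    rw [show solvNabla n μ Z (γ • EuclideanSpace.single k 1)
        = ⟪solvL n μ Z, (γ • EuclideanSpace.single k 1 : EuclideanSpace ℝ (Fin (n+1)))⟫ •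
            (EuclideanSpace.single (0 : Fin (n+1)) (1:ℝ))
          - (γ • EuclideanSpace.single k 1 : EuclideanSpace ℝ (Fin (n+1))) 0 • solvL n μ Z
        from rfl]
    have h1 : (γ • EuclideanSpace.single k 1 : EuclideanSpace ℝ (Fin (n+1))) 0 = 0 := by
      simp [EuclideanSpace.single_apply, (Ne.symm hk0 : (0 : Fin (n+1)) ≠ k)]
    have h2 : ⟪solvL n μ Z, (γ • EuclideanSpace.single k 1 : EuclideanSpace ℝ (Fin (n+1)))⟫
        = γ * (μ k * Z k) := by
      rw [real_inner_smul_right, EuclideanSpace.inner_single_right]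
      simp [solvL]
    rw [h1, inner_sub_left, real_inner_smul_left, real_inner_smul_left, h2,
      EuclideanSpace.inner_single_left]
    simp
  -- Lagrange identity and row extraction
  have hrow : ∀ i : Fin (n+1), (∑ j, (μ i * μ j) * (X i * Y j - X j * Y i)^2)
      = (μ i * (X i * X i)) * Q + (μ i * (Y i * Y i)) * P - 2 * ((μ i * (X i * Y i)) * S) := by
    intro i
    rw [hQdef, hPdef, hSdef, Finset.mul_sum, Finset.mul_sum, Finset.mul_sum,
      Finset.mul_sum, ← Finset.sum_add_distrib, ← Finset.sum_sub_distrib]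
    exact Finset.sum_congr rfl (fun j _ => by ring)
  have hLag : 2 * (P * Q - S^2) = ∑ i, ∑ j, (μ i * μ j) * (X i * Y j - X j * Y i)^2 := by
    rw [Finset.sum_congr rfl (fun i _ => hrow i)]
    rw [Finset.sum_sub_distrib, Finset.sum_add_distrib,
      ← Finset.sum_mul, ← Finset.sum_mul, ← Finset.mul_sum, ← Finset.sum_mul,
      ← hPdef, ← hQdef, ← hSdef]
    ring
  have hf : ∀ i j : Fin (n+1), 0 ≤ (μ i * μ j) * (X i * Y j - X j * Y i)^2 :=
    fun i j => mul_nonneg (mul_nonneg (hμnn i) (hμnn j)) (sq_nonneg _)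
  have hgk : (∑ j, (μ k * μ j) * (X k * Y j - X j * Y k)^2) = μ k * R := by
    rw [hRdef, Finset.mul_sum]; exact Finset.sum_congr rfl (fun j _ => by ring)
  have hcol : (∑ i, (μ i * μ k) * (X i * Y k - X k * Y i)^2) = μ k * R := by
    rw [hRdef, Finset.mul_sum]; exact Finset.sum_congr rfl (fun j _ => by ring)
  have hD2 : 2 * (μ k * R) ≤ ∑ i, ∑ j, (μ i * μ j) * (X i * Y j - X j * Y i)^2 := by
    have e1 : (∑ i, ∑ j, (μ i * μ j) * (X i * Y j - X j * Y i)^2)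
        = (∑ j, (μ k * μ j) * (X k * Y j - X j * Y k)^2)
          + ∑ i ∈ Finset.univ.erase k, ∑ j, (μ i * μ j) * (X i * Y j - X j * Y i)^2 :=
      (Finset.add_sum_erase _ _ (Finset.mem_univ k)).symm
    have e2 : ∑ i ∈ Finset.univ.erase k, ((μ i * μ k) * (X i * Y k - X k * Y i)^2)
        ≤ ∑ i ∈ Finset.univ.erase k, ∑ j, (μ i * μ j) * (X i * Y j - X j * Y i)^2 :=
      Finset.sum_le_sum (fun i _ => Finset.single_le_sum (fun j _ => hf i j) (Finset.mem_univ k))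
    have e3 : ∑ i ∈ Finset.univ.erase k, ((μ i * μ k) * (X i * Y k - X k * Y i)^2)
        = (∑ i, (μ i * μ k) * (X i * Y k - X k * Y i)^2)
          - (μ k * μ k) * (X k * Y k - X k * Y k)^2 :=
      Finset.sum_erase_eq_sub (Finset.mem_univ k)
    rw [e1]
    have : (μ k * μ k) * (X k * Y k - X k * Y k)^2 = 0 := by ring
    rw [hgk]
    linarith [e2, e3.symm.le, hcol.le, hcol.ge]
  have hI1 : μ k * R ≤ P * Q - S^2 := by linarith
  -- lower bound for R
  have hak : (∑ j, (X k * Y j - X j * Y k)^2) = (X k)^2 + (Y k)^2 := by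
    rw [Finset.sum_congr rfl (fun j _ => show (X k * Y j - X j * Y k)^2
      = (X k * X k) * (Y j * Y j) + (Y k * Y k) * (X j * X j)
        - (2 * (X k * Y k)) * (X j * Y j) from by ring),
      Finset.sum_sub_distrib, Finset.sum_add_distrib, ← Finset.mul_sum, ← Finset.mul_sum,
      ← Finset.mul_sum, hX', hY', hXY']
    ring
  have hI2 : μ 1 * ((X k)^2 + (Y k)^2) - μ 1 * (X k * Y 0 - X 0 * Y k)^2 ≤ R := by
    have hpt : ∀ j : Fin (n+1), μ 1 * (X k * Y j - X j * Y k)^2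
        ≤ μ j * (X k * Y j - X j * Y k)^2
          + (if j = 0 then μ 1 * (X k * Y 0 - X 0 * Y k)^2 else 0) := by
      intro j
      by_cases hj : j = 0
      · subst hj; simp [hμ0]
      · rw [if_neg hj, add_zero]
        exact mul_le_mul_of_nonneg_right (hmono 1 j h10 (hle j hj)) (sq_nonneg _)
    have hsum := Finset.sum_le_sum (fun j (_ : j ∈ Finset.univ) => hpt j)
    rw [Finset.sum_add_distrib, ← Finset.mul_sum, hak, ← hRdef] at hsum
    have : (∑ j : Fin (n+1), if j = 0 then μ 1 * (X k * Y 0 - X 0 * Y k)^2 else 0)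
        = μ 1 * (X k * Y 0 - X 0 * Y k)^2 := by
      rw [Finset.sum_ite_eq' Finset.univ (0 : Fin (n+1))
        (fun _ => μ 1 * (X k * Y 0 - X 0 * Y k)^2)]
      simp
    rw [this] at hsum
    linarith
  -- lower bound for W
  have hI3 : μ 1 * μ k * (X k * Y 0 - X 0 * Y k)^2 ≤ W := by
    have h1 : (μ k * μ k) * (Y 0 * X k - X 0 * Y k)^2 ≤ W := by
      rw [hWdef]
      exact Finset.single_le_sum
        (f := fun j => μ j * μ j * (Y 0 * X j - X 0 * Y j)^2)
        (fun j _ => mul_nonneg (mul_nonneg (hμnn j) (hμnn j)) (sq_nonneg _))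
        (Finset.mem_univ k)
    have heq : (X k * Y 0 - X 0 * Y k)^2 = (Y 0 * X k - X 0 * Y k)^2 := by ring
    have h2 : μ 1 * μ k * (Y 0 * X k - X 0 * Y k)^2 ≤ (μ k * μ k) * (Y 0 * X k - X 0 * Y k)^2 :=
      mul_le_mul_of_nonneg_right (mul_le_mul_of_nonneg_right hm1k mkpos.le) (sq_nonneg _)
    rw [heq]; linarith
  -- Cauchy-Schwarz for the projections of e0 and ek
  have hs2 := proj_cs n k hk0 X Y hX hY hXY
  obtain ⟨hs2a, ht0⟩ := hs2
  -- assemble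
  rw [solvWeylSec, curvFormula n μ hμ0 X Y, hSe, hPe, hQe, hUe, hVe, hTe, hGperp,
    hNab X, hNab Y]
  -- curvature bound
  have hK : S^2 - P*Q - (Y 0)^2 * U + 2 * (X 0) * (Y 0) * T - (X 0)^2 * V
      ≤ -(μ 1 * μ k) * ((X k)^2 + (Y k)^2) := by
    have step1 := mul_le_mul_of_nonneg_left hI2 mkpos.le
    linarith only [hI1, hI3, step1, hQuad]
  -- positivity of the γ-quadratic
  have hZ : 0 ≤ γ^2 * (1 - (X k)^2 - (Y k)^2) + γ * μ k * (X k * X 0 + Y k * Y 0)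
      + μ 1 * μ k * ((X k)^2 + (Y k)^2) := by
    set t := 1 - (X k)^2 - (Y k)^2 with htdef
    set s := X k * X 0 + Y k * Y 0 with hsdef
    have key : 4 * (γ^2 - μ 1 * μ k) * (γ^2 * t + γ * μ k * s + μ 1 * μ k * (1 - t))
        = (2 * (γ^2 - μ 1 * μ k) * s + γ * μ k)^2
          + (γ^2 * (4 * μ 1 - μ k) - 4 * (μ 1)^2 * μ k) * μ k
          + 4 * (γ^2 - μ 1 * μ k)^2 * (t - s^2) := by ring
    have h1 : 0 ≤ (2 * (γ^2 - μ 1 * μ k) * s + γ * μ k)^2 := sq_nonneg _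
    have h2 : 0 ≤ (γ^2 * (4 * μ 1 - μ k) - 4 * (μ 1)^2 * μ k) * μ k :=
      mul_nonneg (by linarith only [hγ2]) mkpos.le
    have h3 : 0 ≤ 4 * (γ^2 - μ 1 * μ k)^2 * (t - s^2) := by
      apply mul_nonneg (by positivity)
      linarith only [hs2a]
    have h4 : 0 ≤ 4 * (γ^2 - μ 1 * μ k) * (γ^2 * t + γ * μ k * s + μ 1 * μ k * (1 - t)) := by
      rw [key]; linarith only [h1, h2, h3]
    have h5 : 0 ≤ γ^2 * t + γ * μ k * s + μ 1 * μ k * (1 - t) := by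
      have h40 : (4 * (γ^2 - μ 1 * μ k)) * 0
          ≤ (4 * (γ^2 - μ 1 * μ k)) * (γ^2 * t + γ * μ k * s + μ 1 * μ k * (1 - t)) := by
        rw [mul_zero]; linarith only [h4]
      exact le_of_mul_le_mul_left h40 (by linarith only [hA'])
    have ht1 : 1 - t = (X k)^2 + (Y k)^2 := by rw [htdef]; ring
    calc (0:ℝ) ≤ γ^2 * t + γ * μ k * s + μ 1 * μ k * (1 - t) := h5
      _ = γ^2 * t + γ * μ k * s + μ 1 * μ k * ((X k)^2 + (Y k)^2) := by rw [ht1]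
  linarith only [hK, hZ]
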